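/- Let G be a finite abelian group and g an element of G. Define the function Φ̃_g : G × G → k* by Φ̃_g(e,f) = Φ(g,e,f)·Φ(e,f,g)/Φ(e,g,f), where Φ is a normalized 3-cocycle on G with values in the multiplicative group k* of a field k. Then Φ̃_g is a 2-cocycle on G, i.e., Φ̃_g(f,h)·Φ̃_g(e,fh) = Φ̃_g(ef,h)·Φ̃_g(e,f) for all e,f,h ∈ G. -/

import Mathlib

/-- If `Φ` is a normalized 3-cocycle on a finite abelian group `G` with values in `kˣ`
(trivial action), then for each `g : G` the function
`Φ̃_g(e,f) = Φ(g,e,f)·Φ(e,f,g)/Φ(e,g,f)` is a 2-cocycle on `G`. -/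
theorem stmt_1 {k : Type*} [Field k] [CharZero k] {G : Type*} [CommGroup G] [Fintype G]
    (Φ : G → G → G → kˣ)
    (hcocycle : ∀ a b c d : G,
      Φ b c d * Φ a (b * c) d * Φ a b c = Φ (a * b) c d * Φ a b (c * d))
    (hnorm : ∀ a b : G, Φ a 1 b = 1) (g : G) :
    ∀ e f h : G,
      (Φ g f h * Φ f h g / Φ f g h) * (Φ g e (f * h) * Φ e (f * h) g / Φ e g (f * h)) =
      (Φ g (e * f) h * Φ (e * f) h g / Φ (e * f) g h) * (Φ g e f * Φ e f g / Φ e g f) := by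
  intro e f h
  have hne : ∀ a b c : G, ((Φ a b c : kˣ) : k) ≠ 0 := fun a b c => Units.ne_zero _
  have hk : ∀ a b c d : G, ((Φ b c d : kˣ) : k) * Φ a (b*c) d * Φ a b c
      = ((Φ (a*b) c d : kˣ) : k) * Φ a b (c*d) := fun a b c d => by
    exact_mod_cast congrArg Units.val (hcocycle a b c d)
  have h1 : ((Φ g f h : kˣ) : k) * Φ e (f*g) h * Φ e g f
      = ((Φ (e*g) f h : kˣ) : k) * Φ e g (f*h) := by
    have := hk e g f h; rwa [mul_comm g f] at this
  have h2 : ((Φ f h g : kˣ) : k) * Φ e (f*h) g * Φ e f h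
      = ((Φ (e*f) h g : kˣ) : k) * Φ e f (g*h) := by
    have := hk e f h g; rwa [mul_comm h g] at this
  have h3 : ((Φ e f h : kˣ) : k) * Φ g (e*f) h * Φ g e f
      = ((Φ (e*g) f h : kˣ) : k) * Φ g e (f*h) := by
    have := hk g e f h; rwa [mul_comm g e] at this
  have h4 : ((Φ f g h : kˣ) : k) * Φ e (f*g) h * Φ e f g
      = ((Φ (e*f) g h : kˣ) : k) * Φ e f (g*h) := hk e f g h
  have key : ((Φ g f h : kˣ) : k) * Φ f h g * Φ g e (f*h) * Φ e (f*h) g * Φ (e*f) g h * Φ e g f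
      = ((Φ g (e*f) h : kˣ) : k) * Φ (e*f) h g * Φ g e f * Φ e f g * Φ f g h * Φ e g (f*h) := by
    have step :
        (((Φ g f h : kˣ) : k) * Φ f h g * Φ g e (f*h) * Φ e (f*h) g * Φ (e*f) g h * Φ e g f) *
          ((((Φ (e*g) f h : kˣ) : k) * Φ e g (f*h)) *
           (((Φ e f h : kˣ) : k) * Φ g (e*f) h * Φ g e f) *
           (((Φ f g h : kˣ) : k) * Φ e (f*g) h * Φ e f g) *
           (((Φ (e*f) h g : kˣ) : k) * Φ e f (g*h)))
        = (((Φ g (e*f) h : kˣ) : k) * Φ (e*f) h g * Φ g e f * Φ e f g * Φ f g h * Φ e g (f*h)) *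
          ((((Φ g f h : kˣ) : k) * Φ e (f*g) h * Φ e g f) *
           (((Φ (e*g) f h : kˣ) : k) * Φ g e (f*h)) *
           (((Φ (e*f) g h : kˣ) : k) * Φ e f (g*h)) *
           (((Φ f h g : kˣ) : k) * Φ e (f*h) g * Φ e f h)) := by ring
    rw [h1, ← h3, ← h4, h2] at step
    exact mul_right_cancel₀ (by
      exact mul_ne_zero (mul_ne_zero (mul_ne_zero
        (mul_ne_zero (hne _ _ _) (hne _ _ _))
        (mul_ne_zero (mul_ne_zero (hne _ _ _) (hne _ _ _)) (hne _ _ _)))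
        (mul_ne_zero (mul_ne_zero (hne _ _ _) (hne _ _ _)) (hne _ _ _)))
        (mul_ne_zero (hne _ _ _) (hne _ _ _))) step
  rw [← Units.val_inj]
  push_cast
  field_simp
  linear_combination key
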